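/- (Construction of simulation functions for linear switched systems.) Let S be a nonempty mode set and, for each s ∈ S, let real matrices A_s (n×n), B_s (n×m), C_s (q×n), D_s (n×r) describe the concrete system and Â_s (n̂×n̂), B̂_s (n̂×m̂), Ĉ_s (q×n̂), D̂_s (n̂×r) the abstract system; let K_s (m×n), P_s (n×n̂), Q_s (m×n̂), T_s (m×r), R_s (m×m̂) be given matrices, M_s (n×n) symmetric positive definite, and ε > 0, κ ∈ (0,1), τ ≥ 1 with τκ < 1. Define V_s(x,x̂) := (x − P_s x̂)ᵀ M_s (x − P_s x̂). Assume for every s ∈ S: (i) C_sᵀ C_s ⪯ M_s; (ii) (1 + 1/ε + ε)(A_s + B_s K_s)ᵀ M_s (A_s + B_s K_s) ⪯ κ M_s; (iii) A_s P_s = P_s Â_s − B_s Q_s; (iv) D_s = P_s D̂_s − B_s T_s; (v) C_s P_s = Ĉ_s; and (vi) V_s(x,x̂) ≤ τ V_{s′}(x,x̂) for all s, s′ ∈ S, x ∈ ℝⁿ, x̂ ∈ ℝ^{n̂}. Then for all s′, s ∈ S, all x ∈ ℝⁿ, x̂ ∈ ℝ^{n̂}, û ∈ ℝ^{m̂}, w,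 ŵ ∈ ℝ^{r}, with the interface input u := K_s(x − P_s x̂) + Q_s x̂ + R_s û + T_s ŵ: (a) ‖C_s x − Ĉ_s x̂‖² ≤ V_s(x,x̂); and (b) V_{s′}(A_s x + B_s u + D_s w, Â_s x̂ + B̂_s û + D̂_s ŵ) − V_s(x,x̂) ≤ −(1 − τκ) V_s(x,x̂) + τ(1 + ε + 1/ε)‖M_s^{1/2} D_s‖² ‖w − ŵ‖² + τ(1 + ε + 1/ε)‖M_s^{1/2}(B_s R_s − P_s B̂_s)‖² ‖û‖². -/

import Mathlib

open Matrix

/-- The Euclidean norm of a vector in `ℝⁿ`. -/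
noncomputable def euclNorm {n : ℕ} (v : Fin n → ℝ) : ℝ :=
  ‖(WithLp.equiv 2 (Fin n → ℝ)).symm v‖

/-- The spectral (ℓ²-operator) norm of a real matrix. -/
noncomputable def specNorm {m n : ℕ} (A : Matrix (Fin m) (Fin n) ℝ) : ℝ :=
  ‖LinearMap.toContinuousLinearMap (Matrix.toEuclideanLin A)‖

/-- The positive semidefinite square root of a positive semidefinite matrix
(the former `Matrix.PosSemidef.sqrt`, with its old definition). -/
noncomputable def posSemidefSqrt {n : ℕ} {M : Matrix (Fin n) (Fin n) ℝ}
    (hA : M.PosSemidef) : Matrix (Fin n) (Fin n) ℝ :=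
  hA.1.eigenvectorUnitary.1 * diagonal ((↑) ∘ (√·) ∘ hA.1.eigenvalues) *
  (star hA.1.eigenvectorUnitary : Matrix (Fin n) (Fin n) ℝ)

private lemma posSemidefSqrt_mul_self {n : ℕ} {M : Matrix (Fin n) (Fin n) ℝ}
    (hA : M.PosSemidef) : posSemidefSqrt hA * posSemidefSqrt hA = M := by
  have hU : (star hA.1.eigenvectorUnitary : Matrix (Fin n) (Fin n) ℝ) * hA.1.eigenvectorUnitary.1 = 1 :=
    Unitary.coe_star_mul_self _
  conv_rhs => rw [hA.1.spectral_theorem, Unitary.conjStarAlgAut_apply]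
  simp only [posSemidefSqrt]
  rw [show ∀ X Y Z W V : Matrix (Fin n) (Fin n) ℝ, X * Y * Z * (W * V * Z) = X * (Y * (Z * W) * V) * Z
    from fun X Y Z W V => by simp only [Matrix.mul_assoc]]
  rw [hU, Matrix.mul_one, diagonal_mul_diagonal]
  congr 3
  funext i
  simp [Real.mul_self_sqrt (hA.eigenvalues_nonneg i)]

private lemma posSemidefSqrt_transpose {n : ℕ} {M : Matrix (Fin n) (Fin n) ℝ}
    (hA : M.PosSemidef) : (posSemidefSqrt hA)ᵀ = posSemidefSqrt hA := by
  rw [← conjTranspose_eq_transpose_of_trivial]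
  simp only [posSemidefSqrt, conjTranspose_mul, Matrix.mul_assoc]
  simp [Matrix.star_eq_conjTranspose]

private lemma euclNorm_sq {n : ℕ} (v : Fin n → ℝ) : euclNorm v ^ 2 = v ⬝ᵥ v := by
  rw [euclNorm, ← real_inner_self_eq_norm_sq]
  rw [real_inner_self_eq_norm_sq, EuclideanSpace.norm_sq_eq]
  simp [dotProduct, Real.norm_eq_abs, sq, abs_mul_abs_self]

private lemma euclNorm_nonneg {n : ℕ} (v : Fin n → ℝ) : 0 ≤ euclNorm v := norm_nonneg _

private lemma euclNorm_mulVec_le {m n : ℕ} (A : Matrix (Fin m) (Fin n) ℝ) (v : Fin n → ℝ) :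
    euclNorm (A *ᵥ v) ≤ specNorm A * euclNorm v := by
  have h := (LinearMap.toContinuousLinearMap (Matrix.toEuclideanLin A)).le_opNorm
    ((WithLp.equiv 2 (Fin n → ℝ)).symm v)
  simpa [specNorm, euclNorm, Matrix.toEuclideanLin_apply_piLp_toLp] using h

private lemma dot_mulVec_self_le {m n : ℕ} (A : Matrix (Fin m) (Fin n) ℝ) (v : Fin n → ℝ) :
    (A *ᵥ v) ⬝ᵥ (A *ᵥ v) ≤ specNorm A ^ 2 * (v ⬝ᵥ v) := by
  have h := euclNorm_mulVec_le A v
  have h1 := euclNorm_nonneg (A *ᵥ v)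
  have h2 := euclNorm_nonneg v
  have := mul_self_le_mul_self h1 h
  rw [← euclNorm_sq, ← euclNorm_sq]
  nlinarith [euclNorm_sq v, euclNorm_sq (A *ᵥ v)]

private lemma dot_symm {n : ℕ} {N : Matrix (Fin n) (Fin n) ℝ} (hN : Nᵀ = N)
    (u v : Fin n → ℝ) : u ⬝ᵥ N *ᵥ v = v ⬝ᵥ N *ᵥ u := by
  conv_lhs => rw [← hN]
  rw [dotProduct_mulVec, vecMul_transpose, dotProduct_comm]

private lemma psd_dot {n : ℕ} {N : Matrix (Fin n) (Fin n) ℝ} (hN : N.PosSemidef)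
    (v : Fin n → ℝ) : 0 ≤ v ⬝ᵥ N *ᵥ v := by
  simpa using hN.dotProduct_mulVec_nonneg v

private lemma herm_transpose {n : ℕ} {N : Matrix (Fin n) (Fin n) ℝ} (hN : N.IsHermitian) :
    Nᵀ = N := by rw [← conjTranspose_eq_transpose_of_trivial]; exact hN

private lemma conj_dot {k l n : ℕ} (G : Matrix (Fin k) (Fin n) ℝ) (F : Matrix (Fin k) (Fin l) ℝ)
    (x : Fin n → ℝ) (y : Fin l → ℝ) :
    x ⬝ᵥ (Gᵀ * F) *ᵥ y = (G *ᵥ x) ⬝ᵥ (F *ᵥ y) := by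
  rw [← mulVec_mulVec, dotProduct_mulVec, vecMul_transpose]

private lemma cross_bound {n : ℕ} {N : Matrix (Fin n) (Fin n) ℝ} (hN : N.PosSemidef)
    (u v : Fin n → ℝ) {t : ℝ} (ht : 0 < t) :
    2 * (u ⬝ᵥ N *ᵥ v) ≤ t * (u ⬝ᵥ N *ᵥ u) + t⁻¹ * (v ⬝ᵥ N *ᵥ v) := by
  have h0 := psd_dot hN (t • u - v)
  have hsym := dot_symm (herm_transpose hN.1) v u
  simp only [mulVec_sub, mulVec_smul, sub_dotProduct, dotProduct_sub,
    smul_dotProduct, dotProduct_smul, smul_eq_mul] at h0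
  set X := u ⬝ᵥ N *ᵥ v with hX
  set U := u ⬝ᵥ N *ᵥ u with hU
  set W := v ⬝ᵥ N *ᵥ v with hW
  have key : 2 * t * X ≤ t ^ 2 * U + W := by nlinarith [h0]
  have h3 := mul_le_mul_of_nonneg_left key (inv_pos.mpr ht).le
  have e1 : t⁻¹ * (2 * t * X) = 2 * X := by field_simp
  have e2 : t⁻¹ * (t ^ 2 * U + W) = t * U + t⁻¹ * W := by field_simp
  rw [e1, e2] at h3
  exact h3

private lemma young_triple {n : ℕ} {N : Matrix (Fin n) (Fin n) ℝ} (hN : N.PosSemidef)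
    (a b c : Fin n → ℝ) {ε : ℝ} (hε : 0 < ε) :
    (a + b + c) ⬝ᵥ N *ᵥ (a + b + c) ≤
      (1 + ε + ε⁻¹) * ((a ⬝ᵥ N *ᵥ a) + (b ⬝ᵥ N *ᵥ b) + (c ⬝ᵥ N *ᵥ c)) := by
  have hTr := herm_transpose hN.1
  have hab := cross_bound hN a b hε
  have hac := cross_bound hN a c (inv_pos.mpr hε)
  rw [inv_inv] at hac
  have hbc := cross_bound hN b c hε
  have expand : (a + b + c) ⬝ᵥ N *ᵥ (a + b + c) =
      (a ⬝ᵥ N *ᵥ a) + (b ⬝ᵥ N *ᵥ b) + (c ⬝ᵥ N *ᵥ c) +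
      2 * (a ⬝ᵥ N *ᵥ b) + 2 * (a ⬝ᵥ N *ᵥ c) + 2 * (b ⬝ᵥ N *ᵥ c) := by
    rw [mulVec_add, mulVec_add]
    simp only [dotProduct_add, add_dotProduct]
    rw [dot_symm hTr b a, dot_symm hTr c a, dot_symm hTr c b]
    ring
  rw [expand]
  linarith
theorem linear_switched_simulation_function
    {S : Type*} [Nonempty S] {n m q nh mh r : ℕ}
    (A : S → Matrix (Fin n) (Fin n) ℝ) (B : S → Matrix (Fin n) (Fin m) ℝ)
    (C : S → Matrix (Fin q) (Fin n) ℝ) (D : S → Matrix (Fin n) (Fin r) ℝ)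
    (Ah : S → Matrix (Fin nh) (Fin nh) ℝ) (Bh : S → Matrix (Fin nh) (Fin mh) ℝ)
    (Ch : S → Matrix (Fin q) (Fin nh) ℝ) (Dh : S → Matrix (Fin nh) (Fin r) ℝ)
    (K : S → Matrix (Fin m) (Fin n) ℝ) (P : S → Matrix (Fin n) (Fin nh) ℝ)
    (Q : S → Matrix (Fin m) (Fin nh) ℝ) (T : S → Matrix (Fin m) (Fin r) ℝ)
    (R : S → Matrix (Fin m) (Fin mh) ℝ)
    (M : S → Matrix (Fin n) (Fin n) ℝ) (hM : ∀ s, (M s).PosDef)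
    (ε κ τ : ℝ) (hε : 0 < ε) (hκ0 : 0 < κ) (hκ1 : κ < 1) (hτ : 1 ≤ τ)
    (hτκ : τ * κ < 1)
    (V : S → (Fin n → ℝ) → (Fin nh → ℝ) → ℝ)
    (hVdef : ∀ s x xh,
      V s x xh = (x - (P s).mulVec xh) ⬝ᵥ (M s).mulVec (x - (P s).mulVec xh))
    (hi : ∀ s, (M s - (C s)ᵀ * C s).PosSemidef)
    (hii : ∀ s, (κ • M s -
      (1 + 1 / ε + ε) • ((A s + B s * K s)ᵀ * M s * (A s + B s * K s))).PosSemidef)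
    (hiii : ∀ s, A s * P s = P s * Ah s - B s * Q s)
    (hiv : ∀ s, D s = P s * Dh s - B s * T s)
    (hv : ∀ s, C s * P s = Ch s)
    (hvi : ∀ s s' x xh, V s x xh ≤ τ * V s' x xh) :
    ∀ (s' s : S) (x : Fin n → ℝ) (xh : Fin nh → ℝ) (uh : Fin mh → ℝ)
      (w wh : Fin r → ℝ),
      euclNorm ((C s).mulVec x - (Ch s).mulVec xh) ^ 2 ≤ V s x xh ∧
      V s'
          ((A s).mulVec x +
            (B s).mulVec ((K s).mulVec (x - (P s).mulVec xh) +
              (Q s).mulVec xh + (R s).mulVec uh + (T s).mulVec wh) +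
            (D s).mulVec w)
          ((Ah s).mulVec xh + (Bh s).mulVec uh + (Dh s).mulVec wh) -
        V s x xh ≤
      -(1 - τ * κ) * V s x xh +
        τ * (1 + ε + 1 / ε) * specNorm (posSemidefSqrt (hM s).posSemidef * D s) ^ 2 *
          euclNorm (w - wh) ^ 2 +
        τ * (1 + ε + 1 / ε) *
          specNorm (posSemidefSqrt (hM s).posSemidef * (B s * R s - P s * Bh s)) ^ 2 *
          euclNorm uh ^ 2 := by
  intro s' s x xh uh w wh
  have hMps := (hM s).posSemidef
  have hTr : (M s)ᵀ = M s := herm_transpose (hM s).1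
  set e : Fin n → ℝ := x - (P s) *ᵥ xh with he
  set Msq := posSemidefSqrt (hM s).posSemidef with hMsq
  have hsq : Msq * Msq = M s := posSemidefSqrt_mul_self hMps
  have hsqT : Msqᵀ = Msq := posSemidefSqrt_transpose hMps
  have quad_sqrt : ∀ v : Fin n → ℝ, v ⬝ᵥ (M s) *ᵥ v = (Msq *ᵥ v) ⬝ᵥ (Msq *ᵥ v) := by
    intro v
    conv_lhs => rw [← hsq, show Msq * Msq = Msqᵀ * Msq from by rw [hsqT]]
    exact conj_dot _ _ _ _
  constructor
  · -- part (a)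
    have h1 : (C s) *ᵥ x - (Ch s) *ᵥ xh = (C s) *ᵥ e := by
      rw [he, mulVec_sub, mulVec_mulVec, hv s]
    rw [hVdef, h1, euclNorm_sq, ← conj_dot (C s) (C s) e e]
    have h3 := psd_dot (hi s) e
    rw [sub_mulVec, dotProduct_sub] at h3
    linarith
  · -- part (b)
    set xp : Fin n → ℝ := (A s) *ᵥ x +
        (B s) *ᵥ ((K s) *ᵥ (x - (P s) *ᵥ xh) +
          (Q s) *ᵥ xh + (R s) *ᵥ uh + (T s) *ᵥ wh) + (D s) *ᵥ w with hxp
    set xhp : Fin nh → ℝ := (Ah s) *ᵥ xh + (Bh s) *ᵥ uh + (Dh s) *ᵥ wh with hxhp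
    set a : Fin n → ℝ := (A s + B s * K s) *ᵥ e with ha
    set b : Fin n → ℝ := (D s) *ᵥ (w - wh) with hb
    set c : Fin n → ℝ := (B s * R s - P s * Bh s) *ᵥ uh with hc
    have hiii' : P s * Ah s = A s * P s + B s * Q s := sub_eq_iff_eq_add.mp (hiii s).symm
    have hiv' : P s * Dh s = D s + B s * T s := sub_eq_iff_eq_add.mp (hiv s).symm
    have key : xp - (P s) *ᵥ xhp = a + b + c := by
      rw [hxp, hxhp, ha, hb, hc, he]
      simp only [mulVec_add, mulVec_sub, add_mulVec, sub_mulVec, mulVec_mulVec,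
        hiii', hiv', Matrix.mul_assoc, Matrix.add_mul, Matrix.sub_mul]
      abel
    have hVsp : V s xp xhp = (a + b + c) ⬝ᵥ (M s) *ᵥ (a + b + c) := by
      rw [hVdef, key]
    have hY := young_triple hMps a b c hε
    -- bound on a-term from (ii)
    have h4 := psd_dot (hii s) e
    simp only [sub_mulVec, smul_mulVec, dotProduct_sub, dotProduct_smul,
      smul_eq_mul] at h4
    have hqa : e ⬝ᵥ ((A s + B s * K s)ᵀ * M s * (A s + B s * K s)) *ᵥ e
        = a ⬝ᵥ (M s) *ᵥ a := by
      rw [Matrix.mul_assoc, conj_dot, ← mulVec_mulVec, ha]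
    rw [hqa] at h4
    have haineq : (1 + ε + ε⁻¹) * (a ⬝ᵥ (M s) *ᵥ a) ≤ κ * (e ⬝ᵥ (M s) *ᵥ e) := by
      rw [one_div] at h4; linarith
    -- bound on b-term
    have hbineq : b ⬝ᵥ (M s) *ᵥ b ≤
        specNorm (Msq * D s) ^ 2 * euclNorm (w - wh) ^ 2 := by
      rw [quad_sqrt, hb, mulVec_mulVec, euclNorm_sq]
      exact dot_mulVec_self_le _ _
    -- bound on c-term
    have hcineq : c ⬝ᵥ (M s) *ᵥ c ≤
        specNorm (Msq * (B s * R s - P s * Bh s)) ^ 2 * euclNorm uh ^ 2 := by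
      rw [quad_sqrt, hc, mulVec_mulVec, euclNorm_sq]
      exact dot_mulVec_self_le _ _
    have hτ0 : (0:ℝ) ≤ τ := le_trans zero_le_one hτ
    have hc0 : (0:ℝ) ≤ 1 + ε + ε⁻¹ := by positivity
    have hchain : V s' xp xhp ≤ τ * κ * (e ⬝ᵥ (M s) *ᵥ e) +
        τ * (1 + ε + ε⁻¹) * (specNorm (Msq * D s) ^ 2 * euclNorm (w - wh) ^ 2) +
        τ * (1 + ε + ε⁻¹) *
          (specNorm (Msq * (B s * R s - P s * Bh s)) ^ 2 * euclNorm uh ^ 2) := by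
      have h5 : V s' xp xhp ≤ τ * V s xp xhp := hvi s' s xp xhp
      rw [hVsp] at h5
      have h6 := mul_le_mul_of_nonneg_left hY hτ0
      have h7 := mul_le_mul_of_nonneg_left haineq hτ0
      have h8 := mul_le_mul_of_nonneg_left hbineq (mul_nonneg hτ0 hc0)
      have h9 := mul_le_mul_of_nonneg_left hcineq (mul_nonneg hτ0 hc0)
      nlinarith [h5, h6, h7, h8, h9]
    rw [hVdef s x xh, ← he]
    simp only [one_div]
    linarith [hchain]
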